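/- arXiv:1909.08139 — 5 statements merged into one kernel-verified Lean document; each statement's English description precedes it below -/
import Mathlib

section
/- For real numbers x, y, z with 0 ≤ x, y, z ≤ 1, one has (x+y+z)(3-(x+y+z)) ≤ 3(x(1-y) + y(1-z) + z(1-x)). -/
/-- Key algebraic inequality underlying the parabolic bound `e_p ≥ 2 g_t (1 - g_t)`
for two-qubit gates. -/
theorem key_algebraic_inequality (x y z : ℝ)
    (hx0 : 0 ≤ x) (hx1 : x ≤ 1) (hy0 : 0 ≤ y) (hy1 : y ≤ 1)
    (hz0 : 0 ≤ z) (hz1 : z ≤ 1) :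
    (x + y + z) * (3 - (x + y + z)) ≤ 3 * (x * (1 - y) + y * (1 - z) + z * (1 - x)) := by
  nlinarith [sq_nonneg (x-y), sq_nonneg (y-z), sq_nonneg (x-z)]
end

section
/- Let c₁, c₂, c₃ be real numbers, and define e_p = (2/3)(sin²c₁ cos²c₂ + sin²c₂ cos²c₃ + sin²c₃ cos²c₁) and g_t = (1/3)(sin²c₁ + sin²c₂ + sin²c₃). Then e_p ≥ 2 g_t (1 - g_t). -/
open Real

/-- Parabolic lower bound on the entangling power in terms of the gate typicality,
expressed via the Cartan (Euler) angles of a two-qubit gate. -/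
theorem ep_ge_parabola_of_gt (c₁ c₂ c₃ : ℝ)
    (e_p g_t : ℝ)
    (hep : e_p = (2 / 3) * (sin c₁ ^ 2 * cos c₂ ^ 2 + sin c₂ ^ 2 * cos c₃ ^ 2 +
      sin c₃ ^ 2 * cos c₁ ^ 2))
    (hgt : g_t = (1 / 3) * (sin c₁ ^ 2 + sin c₂ ^ 2 + sin c₃ ^ 2)) :
    e_p ≥ 2 * g_t * (1 - g_t) := by
  have h1 := sin_sq_add_cos_sq c₁
  have h2 := sin_sq_add_cos_sq c₂
  have h3 := sin_sq_add_cos_sq c₃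
  nlinarith [sq_nonneg (sin c₁ ^ 2 - sin c₂ ^ 2), sq_nonneg (sin c₂ ^ 2 - sin c₃ ^ 2),
    sq_nonneg (sin c₃ ^ 2 - sin c₁ ^ 2)]
end

section
/- Let c₁, c₂, c₃ be real numbers and define e_p and g_t as e_p = (2/3)(sin²c₁ cos²c₂ + sin²c₂ cos²c₃ + sin²c₃ cos²c₁), g_t = (1/3)(sin²c₁ + sin²c₂ + sin²c₃). Then e_p + 2 g_t ≤ 2 and g_t ≥ e_p / 2. -/
open Real

/-- Linear boundary relations of the set `K₂` of two-qubit gates in the `(e_p, g_t)` plane,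
expressed via the Cartan (Euler) angles. -/
theorem linear_boundaries_K2 (c₁ c₂ c₃ : ℝ)
    (e_p g_t : ℝ)
    (hep : e_p = (2 / 3) * (sin c₁ ^ 2 * cos c₂ ^ 2 + sin c₂ ^ 2 * cos c₃ ^ 2 +
      sin c₃ ^ 2 * cos c₁ ^ 2))
    (hgt : g_t = (1 / 3) * (sin c₁ ^ 2 + sin c₂ ^ 2 + sin c₃ ^ 2)) :
    e_p + 2 * g_t ≤ 2 ∧ g_t ≥ e_p / 2 := by
  have h1 := sin_sq_add_cos_sq c₁
  have h2 := sin_sq_add_cos_sq c₂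
  have h3 := sin_sq_add_cos_sq c₃
  have s1 := sq_nonneg (sin c₁)
  have s2 := sq_nonneg (sin c₂)
  have s3 := sq_nonneg (sin c₃)
  have t1 := sq_nonneg (cos c₁)
  have t2 := sq_nonneg (cos c₂)
  have t3 := sq_nonneg (cos c₃)
  constructor <;> nlinarith [mul_nonneg s1 s2, mul_nonneg s2 s3, mul_nonneg s3 s1,
    mul_nonneg s1 t2, mul_nonneg s2 t3, mul_nonneg s3 t1]
end

section
/- For the fractional power of the swap gate U_t = exp(itS) on C^N ⊗ C^N, the entangling power and gate typicality satisfy e_p(U_t) = (1/2)sin²(2t) and g_t(U_t) = sin²t, and consequently e_p(U_t) = 2 g_t(U_t)(1 - g_t(U_t)) for all real t and all N ≥ 2. -/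
open Matrix Complex

noncomputable section

/-- The swap operator `S` on `ℂ^N ⊗ ℂ^N`: `⟨iα|S|jβ⟩ = δ_{iβ} δ_{αj}`. -/
def swapOp (N : ℕ) : Matrix (Fin N × Fin N) (Fin N × Fin N) ℂ :=
  Matrix.of fun p q => if p.1 = q.2 ∧ p.2 = q.1 then 1 else 0

/-- The reshuffled matrix: `(U^R)_{ij,αβ} = U_{iα,jβ}`. -/
def resh (N : ℕ) (U : Matrix (Fin N × Fin N) (Fin N × Fin N) ℂ) :
    Matrix (Fin N × Fin N) (Fin N × Fin N) ℂ :=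
  Matrix.of fun p q => U (p.1, q.1) (p.2, q.2)

/-- Linear operator entanglement `E(U) = 1 - (1/N⁴) Tr((U^R U^{R†})²)`. -/
def EE (N : ℕ) (U : Matrix (Fin N × Fin N) (Fin N × Fin N) ℂ) : ℝ :=
  1 - (1 / (N : ℝ) ^ 4) * (((resh N U * (resh N U)ᴴ) ^ 2).trace).re

/-- Entangling power `e_p(U) = [E(U) + E(US) − E(S)] / E(S)`. -/
def ep (N : ℕ) (U : Matrix (Fin N × Fin N) (Fin N × Fin N) ℂ) : ℝ :=
  (EE N U + EE N (U * swapOp N) - EE N (swapOp N)) / EE N (swapOp N)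

/-- Gate typicality `g_t(U) = [E(U) − E(US) + E(S)] / (2 E(S))`. -/
def gt' (N : ℕ) (U : Matrix (Fin N × Fin N) (Fin N × Fin N) ℂ) : ℝ :=
  (EE N U - EE N (U * swapOp N) + EE N (swapOp N)) / (2 * EE N (swapOp N))

/-! ### Auxiliary lemmas -/

section ExpAux
open NormedSpace
variable {A : Type*} [NormedRing A] [NormedAlgebra ℂ A] [CompleteSpace A]

lemma exp_smul_of_sq (s : A) (hs : s * s = 1) (c : ℂ) :
    exp (c • s) = Complex.cosh c • (1 : A) + Complex.sinh c • s := by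
  have hse : ∀ k : ℕ, s ^ (2 * k) = 1 := fun k => by
    rw [pow_mul, sq, hs, one_pow]
  have hso : ∀ k : ℕ, s ^ (2 * k + 1) = s := fun k => by
    rw [pow_succ, hse, one_mul]
  rw [exp_eq_tsum ℂ]
  refine HasSum.tsum_eq ?_
  have h1 := (Complex.hasSum_cosh c).smul_const (1 : A)
  have h2 := (Complex.hasSum_sinh c).smul_const s
  refine HasSum.even_add_odd ?_ ?_
  · convert h1 using 2 with k
    rw [smul_pow, hse, smul_smul, div_eq_inv_mul]
  · convert h2 using 2 with k
    rw [smul_pow, hso, smul_smul, div_eq_inv_mul]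

end ExpAux

/-- The reshuffling of the identity, `P = |v⟩⟨v|` with `v_{iα} = δ_{iα}`. -/
def Pm (N : ℕ) : Matrix (Fin N × Fin N) (Fin N × Fin N) ℂ :=
  Matrix.of fun p q => if p.1 = p.2 ∧ q.1 = q.2 then 1 else 0

variable (N : ℕ)

lemma swap_mul_swap : swapOp N * swapOp N = 1 := by
  ext ⟨i, α⟩ ⟨j, β⟩
  simp [Matrix.mul_apply, swapOp, Matrix.one_apply, Prod.ext_iff, ite_and,
    Fintype.sum_prod_type, Finset.sum_ite_eq, Finset.sum_ite_eq', eq_comm, and_comm]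

lemma P_mul_P : Pm N * Pm N = (N : ℂ) • Pm N := by
  ext ⟨i, α⟩ ⟨j, β⟩
  simp only [Matrix.mul_apply, Pm, Matrix.of_apply, Matrix.smul_apply, smul_eq_mul,
    Fintype.sum_prod_type, ite_and]
  by_cases h1 : i = α <;> by_cases h2 : j = β <;> simp [h1, h2, Finset.sum_ite_eq]

lemma swap_mul_P : swapOp N * Pm N = Pm N := by
  ext ⟨i, α⟩ ⟨j, β⟩
  simp only [Matrix.mul_apply, Pm, swapOp, Matrix.of_apply, Fintype.sum_prod_type, ite_and]
  by_cases h1 : i = α <;> by_cases h2 : j = β <;>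
    simp [h1, h2, Finset.sum_ite_eq, Finset.sum_ite_eq', eq_comm]

lemma P_mul_swap : Pm N * swapOp N = Pm N := by
  ext ⟨i, α⟩ ⟨j, β⟩
  simp only [Matrix.mul_apply, Pm, swapOp, Matrix.of_apply, Fintype.sum_prod_type, ite_and]
  by_cases h1 : i = α <;> by_cases h2 : j = β <;>
    simp [h1, h2, Finset.sum_ite_eq, Finset.sum_ite_eq', eq_comm]

lemma swap_ct : (swapOp N)ᴴ = swapOp N := by
  ext ⟨i, α⟩ ⟨j, β⟩
  simp only [conjTranspose_apply, swapOp, Matrix.of_apply, apply_ite (star : ℂ → ℂ),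
    star_one, star_zero]
  by_cases h1 : i = β <;> by_cases h2 : α = j <;> simp [h1, h2, eq_comm]

lemma P_ct : (Pm N)ᴴ = Pm N := by
  ext ⟨i, α⟩ ⟨j, β⟩
  simp only [conjTranspose_apply, Pm, Matrix.of_apply, apply_ite (star : ℂ → ℂ),
    star_one, star_zero]
  by_cases h1 : i = α <;> by_cases h2 : j = β <;> simp [h1, h2, eq_comm]

lemma trace_P : (Pm N).trace = (N : ℂ) := by
  simp only [Matrix.trace, Matrix.diag, Pm, Matrix.of_apply, Fintype.sum_prod_type, and_self]
  simp [Finset.sum_ite_eq]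

lemma resh_one : resh N 1 = Pm N := by
  ext ⟨i, α⟩ ⟨j, β⟩
  simp [resh, Pm, Matrix.one_apply, Prod.ext_iff]

lemma resh_swap : resh N (swapOp N) = swapOp N := by
  ext ⟨i, α⟩ ⟨j, β⟩
  simp only [resh, swapOp, Matrix.of_apply]
  by_cases h1 : i = β <;> by_cases h2 : α = j <;> simp [h1, h2, eq_comm]

lemma resh_lin (x y : ℂ) (A B : Matrix (Fin N × Fin N) (Fin N × Fin N) ℂ) :
    resh N (x • A + y • B) = x • resh N A + y • resh N B := by
  ext ⟨i, α⟩ ⟨j, β⟩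
  rfl

/-- The trace of the square of `α • P + β • 1`. -/
lemma trace_sq (α β : ℂ) :
    ((α • Pm N + β • (1 : Matrix (Fin N × Fin N) (Fin N × Fin N) ℂ)) ^ 2).trace =
      α ^ 2 * (N : ℂ) ^ 2 + 2 * α * β * (N : ℂ) + β ^ 2 * (N : ℂ) ^ 2 := by
  rw [sq]
  simp only [mul_add, add_mul, smul_mul_assoc, mul_smul_comm, smul_smul, P_mul_P,
    mul_one, one_mul]
  simp only [Matrix.trace_add, Matrix.trace_smul, trace_P, Matrix.trace_one,
    smul_eq_mul, Fintype.card_prod, Fintype.card_fin]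
  push_cast
  ring

/-- `R Rᴴ` for `R = x•P + (y i)•S` with real `x`, `y`. -/
lemma RRH_P (x y : ℝ) :
    ((x : ℂ) • Pm N + ((y : ℂ) * I) • swapOp N) *
      ((x : ℂ) • Pm N + ((y : ℂ) * I) • swapOp N)ᴴ =
      ((x ^ 2 : ℂ) * (N : ℂ)) • Pm N + ((y ^ 2 : ℂ)) • 1 := by
  simp only [conjTranspose_add, conjTranspose_smul, swap_ct, P_ct, star_mul', Complex.star_def,
    Complex.conj_I, Complex.conj_ofReal]
  simp only [mul_add, add_mul, smul_mul_assoc, mul_smul_comm, smul_smul, P_mul_P,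
    swap_mul_swap, swap_mul_P, P_mul_swap]
  match_scalars <;> ring_nf <;> simp [Complex.I_sq] <;> ring

/-- `R Rᴴ` for `R = x•S + (y i)•P` with real `x`, `y`. -/
lemma RRH_S (x y : ℝ) :
    ((x : ℂ) • swapOp N + ((y : ℂ) * I) • Pm N) *
      ((x : ℂ) • swapOp N + ((y : ℂ) * I) • Pm N)ᴴ =
      ((y ^ 2 : ℂ) * (N : ℂ)) • Pm N + ((x ^ 2 : ℂ)) • 1 := by
  simp only [conjTranspose_add, conjTranspose_smul, swap_ct, P_ct, star_mul', Complex.star_def,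
    Complex.conj_I, Complex.conj_ofReal]
  simp only [mul_add, add_mul, smul_mul_assoc, mul_smul_comm, smul_smul, P_mul_P,
    swap_mul_swap, swap_mul_P, P_mul_swap]
  match_scalars <;> ring_nf <;> simp [Complex.I_sq] <;> ring

/-- The value of `E` on `cos t • 1 + (sin t * i) • S`. -/
lemma EE_U (t : ℝ) :
    EE N ((Real.cos t : ℂ) • 1 + ((Real.sin t : ℂ) * I) • swapOp N) =
      1 - (1 / (N : ℝ) ^ 4) * (Real.cos t ^ 4 * (N : ℝ) ^ 4 +
        2 * Real.cos t ^ 2 * Real.sin t ^ 2 * (N : ℝ) ^ 2 + Real.sin t ^ 4 * (N : ℝ) ^ 2) := by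
  rw [EE, resh_lin, resh_one, resh_swap, RRH_P, trace_sq]
  congr 1
  have : ((Real.cos t : ℂ) ^ 2 * (N : ℂ)) ^ 2 * (N : ℂ) ^ 2 +
      2 * ((Real.cos t : ℂ) ^ 2 * (N : ℂ)) * (Real.sin t : ℂ) ^ 2 * (N : ℂ) +
      ((Real.sin t : ℂ) ^ 2) ^ 2 * (N : ℂ) ^ 2 =
      ((Real.cos t ^ 4 * (N : ℝ) ^ 4 + 2 * Real.cos t ^ 2 * Real.sin t ^ 2 * (N : ℝ) ^ 2 +
        Real.sin t ^ 4 * (N : ℝ) ^ 2 : ℝ) : ℂ) := by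
    push_cast; ring
  rw [this, Complex.ofReal_re]

lemma EE_US (t : ℝ) :
    EE N ((Real.cos t : ℂ) • swapOp N + ((Real.sin t : ℂ) * I) • 1) =
      1 - (1 / (N : ℝ) ^ 4) * (Real.cos t ^ 4 * (N : ℝ) ^ 2 +
        2 * Real.cos t ^ 2 * Real.sin t ^ 2 * (N : ℝ) ^ 2 + Real.sin t ^ 4 * (N : ℝ) ^ 4) := by
  rw [EE, resh_lin, resh_one, resh_swap, RRH_S, trace_sq]
  congr 1
  have : ((Real.sin t : ℂ) ^ 2 * (N : ℂ)) ^ 2 * (N : ℂ) ^ 2 +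
      2 * ((Real.sin t : ℂ) ^ 2 * (N : ℂ)) * (Real.cos t : ℂ) ^ 2 * (N : ℂ) +
      ((Real.cos t : ℂ) ^ 2) ^ 2 * (N : ℂ) ^ 2 =
      ((Real.cos t ^ 4 * (N : ℝ) ^ 2 + 2 * Real.cos t ^ 2 * Real.sin t ^ 2 * (N : ℝ) ^ 2 +
        Real.sin t ^ 4 * (N : ℝ) ^ 4 : ℝ) : ℂ) := by
    push_cast; ring
  rw [this, Complex.ofReal_re]

lemma EE_S : EE N (swapOp N) = 1 - (1 / (N : ℝ) ^ 4) * (N : ℝ) ^ 2 := by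
  rw [EE, resh_swap, swap_ct, swap_mul_swap, one_pow, Matrix.trace_one]
  simp [Fintype.card_prod, sq]

/-- The closed form of `exp(i t S)`. -/
lemma exp_swap (t : ℝ) :
    NormedSpace.exp ((Complex.I * (t : ℂ)) • swapOp N) =
      (Real.cos t : ℂ) • 1 + ((Real.sin t : ℂ) * I) • swapOp N := by
  letI : SeminormedRing (Matrix (Fin N × Fin N) (Fin N × Fin N) ℂ) :=
    Matrix.linftyOpSemiNormedRing
  letI : NormedRing (Matrix (Fin N × Fin N) (Fin N × Fin N) ℂ) := Matrix.linftyOpNormedRing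
  letI : NormedAlgebra ℂ (Matrix (Fin N × Fin N) (Fin N × Fin N) ℂ) :=
    Matrix.linftyOpNormedAlgebra
  refine (exp_smul_of_sq (swapOp N) (swap_mul_swap N) (Complex.I * (t : ℂ))).trans ?_
  rw [mul_comm Complex.I (t : ℂ), Complex.cosh_mul_I, Complex.sinh_mul_I,
    ← Complex.ofReal_cos, ← Complex.ofReal_sin]

/-- For the fractional power of swap `U_t = exp(itS)` one has `e_p(U_t) = (1/2) sin²(2t)`,
`g_t(U_t) = sin² t`, and hence `e_p(U_t) = 2 g_t(U_t)(1 − g_t(U_t))`, for all `t` and `N ≥ 2`. -/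
theorem swap_powers_on_parabola (N : ℕ) (hN : 2 ≤ N) (t : ℝ) :
    ep N (NormedSpace.exp ((Complex.I * (t : ℂ)) • swapOp N)) = (1 / 2) * Real.sin (2 * t) ^ 2 ∧
    gt' N (NormedSpace.exp ((Complex.I * (t : ℂ)) • swapOp N)) = Real.sin t ^ 2 ∧
    ep N (NormedSpace.exp ((Complex.I * (t : ℂ)) • swapOp N)) =
      2 * gt' N (NormedSpace.exp ((Complex.I * (t : ℂ)) • swapOp N)) *
        (1 - gt' N (NormedSpace.exp ((Complex.I * (t : ℂ)) • swapOp N))) := by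
  have hd2 : (2 : ℝ) ≤ (N : ℝ) := by exact_mod_cast hN
  have hd0 : (N : ℝ) ≠ 0 := by positivity
  have hne : 1 - 1 / (N : ℝ) ^ 2 ≠ 0 := by
    have h4 : (4 : ℝ) ≤ (N : ℝ) ^ 2 := by nlinarith
    have : (1 : ℝ) / (N : ℝ) ^ 2 ≤ 1 / 4 := by
      apply div_le_div_of_nonneg_left (by norm_num) (by norm_num) h4
    nlinarith
  have hES : EE N (swapOp N) = 1 - 1 / (N : ℝ) ^ 2 := by
    rw [EE_S]; field_simp
  have hUS : NormedSpace.exp ((Complex.I * (t : ℂ)) • swapOp N) * swapOp N =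
      (Real.cos t : ℂ) • swapOp N + ((Real.sin t : ℂ) * I) • 1 := by
    rw [exp_swap, add_mul, smul_mul_assoc, smul_mul_assoc, one_mul, swap_mul_swap]
  have hxy : Real.cos t ^ 2 + Real.sin t ^ 2 = 1 := by
    rw [add_comm]; exact Real.sin_sq_add_cos_sq t
  set x := Real.cos t
  set y := Real.sin t
  have hy2 : y ^ 2 = 1 - x ^ 2 := by linarith
  have hy4 : y ^ 4 = (1 - x ^ 2) ^ 2 := by rw [show y ^ 4 = (y ^ 2) ^ 2 by ring, hy2]
  have h1 : EE N (NormedSpace.exp ((Complex.I * (t : ℂ)) • swapOp N)) =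
      1 - (1 / (N : ℝ) ^ 4) * (x ^ 4 * (N : ℝ) ^ 4 + 2 * x ^ 2 * y ^ 2 * (N : ℝ) ^ 2
        + y ^ 4 * (N : ℝ) ^ 2) := by
    rw [exp_swap]; exact EE_U N t
  have h2 : EE N (NormedSpace.exp ((Complex.I * (t : ℂ)) • swapOp N) * swapOp N) =
      1 - (1 / (N : ℝ) ^ 4) * (x ^ 4 * (N : ℝ) ^ 2 + 2 * x ^ 2 * y ^ 2 * (N : ℝ) ^ 2
        + y ^ 4 * (N : ℝ) ^ 4) := by
    rw [hUS]; exact EE_US N t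
  have hep : ep N (NormedSpace.exp ((Complex.I * (t : ℂ)) • swapOp N)) = 2 * x ^ 2 * y ^ 2 := by
    rw [ep, h1, h2, hES, hy4, hy2, div_eq_iff hne]
    field_simp
    ring
  have hgt : gt' N (NormedSpace.exp ((Complex.I * (t : ℂ)) • swapOp N)) = y ^ 2 := by
    have hne' : 2 * (1 - 1 / (N : ℝ) ^ 2) ≠ 0 := mul_ne_zero two_ne_zero hne
    rw [gt', h1, h2, hES, hy4, hy2, div_eq_iff hne']
    field_simp
    ring
  refine ⟨?_, ?_, ?_⟩
  · rw [hep, Real.sin_two_mul]; ring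
  · rw [hgt]
  · rw [hep, hgt]; linear_combination 2 * y ^ 2 * hxy
end
end

section
/- The reshuffling of the discrete Fourier transform matrix F of order N², with entries F_{mn} = (1/N) exp(2πi mn/N²), is again unitary. Consequently the operator entanglement of F is maximal: E(F) = 1 − 1/N². -/
open Matrix Complex

noncomputable section

/-- The discrete Fourier transform of order `N²` in bipartite index notation,
with combined index `m = k + αN`: `⟨kα|F|jβ⟩ = (1/N) exp(2πi (k+αN)(j+βN)/N²)`. -/
def dft (N : ℕ) : Matrix (Fin N × Fin N) (Fin N × Fin N) ℂ :=
  Matrix.of fun p q =>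
    (1 / (N : ℂ)) * Complex.exp (2 * Real.pi * Complex.I *
      (((p.1.val : ℂ) + (p.2.val : ℂ) * N) * ((q.1.val : ℂ) + (q.2.val : ℂ) * N)) / (N : ℂ) ^ 2)

lemma key_sum (N : ℕ) (hN : 0 < N) (j j' : Fin N) :
    ∑ a : Fin N, Complex.exp (2 * Real.pi * Complex.I * ((j.val : ℂ) - (j'.val : ℂ)) * a / N)
      = if j = j' then (N : ℂ) else 0 := by
  have hNC : (N : ℂ) ≠ 0 := Nat.cast_ne_zero.mpr hN.ne'
  set w : ℂ := Complex.exp (2 * Real.pi * Complex.I * ((j.val : ℂ) - (j'.val : ℂ)) / N) with hw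
  have hpow : ∀ a : Fin N,
      Complex.exp (2 * Real.pi * Complex.I * ((j.val : ℂ) - (j'.val : ℂ)) * a / N) = w ^ (a : ℕ) := by
    intro a
    rw [hw, ← Complex.exp_nat_mul]
    ring_nf
  simp_rw [hpow]
  rw [Fin.sum_univ_eq_sum_range (fun k => w ^ k)]
  by_cases h : j = j'
  · subst h
    have : w = 1 := by
      rw [hw]; simp
    simp [this]
  · rw [if_neg h]
    have hwN : w ^ N = 1 := by
      rw [hw, ← Complex.exp_nat_mul]
      have : (N : ℂ) * (2 * Real.pi * Complex.I * ((j.val : ℂ) - (j'.val : ℂ)) / N)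
          = ((((j.val : ℤ) - (j'.val : ℤ)) : ℤ) : ℂ) * (2 * Real.pi * Complex.I) := by
        push_cast; field_simp
      rw [this, Complex.exp_int_mul_two_pi_mul_I]
    have hw1 : w ≠ 1 := by
      rw [hw, Ne, Complex.exp_eq_one_iff]
      rintro ⟨n, hn⟩
      have h2 : (2 * Real.pi * Complex.I) ≠ 0 := by
        simp [Real.pi_ne_zero, Complex.I_ne_zero]
      have : ((j.val : ℂ) - (j'.val : ℂ)) = n * N := by
        field_simp at hn
        have h3 : 2 * Real.pi * Complex.I * ((j.val : ℂ) - (j'.val : ℂ))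
            = 2 * Real.pi * Complex.I * ((n : ℂ) * N) := by linear_combination (2 * Real.pi * Complex.I) * hn
        exact mul_left_cancel₀ h2 h3
      have hz : ((j.val : ℤ) - (j'.val : ℤ)) = n * N := by exact_mod_cast this
      have hne : (j.val : ℤ) ≠ (j'.val : ℤ) := by
        simpa using fun hh => h (Fin.ext (by exact_mod_cast hh))
      have hj : (j.val : ℤ) < N := by exact_mod_cast j.isLt
      have hj' : (j'.val : ℤ) < N := by exact_mod_cast j'.isLt
      rcases lt_trichotomy n 0 with hn0 | hn0 | hn0
      · have : n * (N : ℤ) ≤ -N := by nlinarith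
        omega
      · subst hn0; simp at hz; omega
      · have : (N : ℤ) ≤ n * N := by nlinarith
        omega
    rw [geom_sum_eq hw1, hwN]
    simp

lemma resh_mul (N : ℕ) (hN : 0 < N) :
    resh N (dft N) * (resh N (dft N))ᴴ = 1 := by
  have hNC : (N : ℂ) ≠ 0 := Nat.cast_ne_zero.mpr hN.ne'
  ext ⟨i, j⟩ ⟨i', j'⟩
  rw [Matrix.mul_apply, Fintype.sum_prod_type]
  simp only [Matrix.conjTranspose_apply, resh, dft, Matrix.of_apply]
  have hterm : ∀ a b : Fin N,
      (1 / (N : ℂ)) * Complex.exp (2 * Real.pi * Complex.I *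
          (((i.val : ℂ) + (a.val : ℂ) * N) * ((j.val : ℂ) + (b.val : ℂ) * N)) / (N : ℂ) ^ 2) *
        (starRingEnd ℂ) ((1 / (N : ℂ)) * Complex.exp (2 * Real.pi * Complex.I *
          (((i'.val : ℂ) + (a.val : ℂ) * N) * ((j'.val : ℂ) + (b.val : ℂ) * N)) / (N : ℂ) ^ 2))
      = (1 / (N : ℂ) ^ 2) * Complex.exp (2 * Real.pi * Complex.I *
            ((i.val : ℂ) * (j.val : ℂ) - (i'.val : ℂ) * (j'.val : ℂ)) / (N : ℂ) ^ 2) *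
          (Complex.exp (2 * Real.pi * Complex.I * ((j.val : ℂ) - (j'.val : ℂ)) * a / N) *
           Complex.exp (2 * Real.pi * Complex.I * ((i.val : ℂ) - (i'.val : ℂ)) * b / N)) := by
    intro a b
    rw [_root_.map_mul, ← Complex.exp_conj]
    simp only [map_div₀, _root_.map_mul, map_add, map_pow, map_ofNat, Complex.conj_I,
      Complex.conj_ofReal, map_natCast, _root_.map_one]
    rw [mul_mul_mul_comm]
    simp only [← Complex.exp_add, mul_assoc]
    rw [← mul_assoc]
    congr 1
    · ring
    · congr 1
      field_simp
      ring
  simp_rw [RCLike.star_def, hterm, ← Finset.mul_sum, ← Finset.sum_mul]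
  rw [key_sum N hN j j', key_sum N hN i i']
  rcases eq_or_ne i i' with hi | hi
  · subst hi
    rcases eq_or_ne j j' with hj | hj
    · subst hj
      simp only [sub_self, mul_zero, zero_div, Complex.exp_zero, mul_one, Matrix.one_apply_eq]
      field_simp
      simp
    · simp [Matrix.one_apply, hj, Prod.ext_iff]
  · simp [Matrix.one_apply, hi, Prod.ext_iff]

/-- The reshuffling of the discrete Fourier transform matrix is again unitary, and hence
the operator entanglement of `F` is maximal: `E(F) = 1 − 1/N²`. -/
theorem dft_reshuffle_unitary (N : ℕ) (hN : 0 < N) :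
    resh N (dft N) ∈ Matrix.unitaryGroup (Fin N × Fin N) ℂ ∧
    EE N (dft N) = 1 - 1 / (N : ℝ) ^ 2 := by
  have h1 : resh N (dft N) * (resh N (dft N))ᴴ = 1 := resh_mul N hN
  have hNR : (N : ℝ) ≠ 0 := Nat.cast_ne_zero.mpr hN.ne'
  constructor
  · rw [Matrix.mem_unitaryGroup_iff]
    exact h1
  · rw [EE, h1, one_pow, Matrix.trace_one]
    simp only [Fintype.card_prod, Fintype.card_fin]
    have hre : ((N : ℂ) * (N : ℂ) : ℂ).re = (N : ℝ) * (N : ℝ) := by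
      simp [Complex.mul_re]
    push_cast
    rw [hre]
    field_simp
end
end
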